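/- Let κ be a regular cardinal and μ a (κ,κ⁺)-cardinal, and let m : [κ⁺]² → κ be the μ-coloring m(α,β) = min{rank(X) : α, β ∈ X ∈ μ}. Then for all α < β < γ < κ⁺ and ν < κ: (a) |{ξ < α : m(ξ,α) ≤ ν}| < κ; (b) m(α,γ) ≤ max{m(α,β), m(β,γ)}; (c) m(α,β) ≤ max{m(α,γ), m(β,γ)}. -/

import Mathlib

open Set Cardinal Ordinal

noncomputable section

/-- Lower a (small) ordinal of `Ordinal.{1}` to `Ordinal.{0}` (the inverse of `Ordinal.lift`
on its range). -/
noncomputable def olower (o : Ordinal.{1}) : Ordinal.{0} :=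
  sInf {a : Ordinal.{0} | Ordinal.lift.{1} a = o}

/-- The order type of a set of ordinals. -/
noncomputable def otp (A : Set Ordinal.{0}) : Ordinal.{0} :=
  olower (Ordinal.type (Subrel ((· < ·) : Ordinal → Ordinal → Prop) (· ∈ A)))

/-- The canonical order-preserving transfer map from a set of ordinals `X` to a set of
ordinals `Y` of the same order type: an element `a ∈ X` is sent to the unique element of `Y`
occupying the same position. -/
noncomputable def omap (X Y : Set Ordinal) (a : Ordinal) : Ordinal :=
  sInf {b | b ∈ Y ∧ otp (Y ∩ Set.Iio b) = otp (X ∩ Set.Iio a)}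

/-- `IsStar X₁ X₂ X` says `X = X₁ * X₂`: `X₁` and `X₂` have the same order type,
`X = X₁ ∪ X₂`, and `X₁ ∩ X₂ < X₁ \ X₂ < X₂ \ X₁` elementwise. -/
def IsStar (X₁ X₂ X : Set Ordinal) : Prop :=
  otp X₁ = otp X₂ ∧ X = X₁ ∪ X₂ ∧
  (∀ a ∈ X₁ ∩ X₂, ∀ b ∈ X₁ \ X₂, a < b) ∧
  (∀ b ∈ X₁ \ X₂, ∀ c ∈ X₂ \ X₁, b < c)

set_option linter.deprecated false in
/-- A `(κ,κ⁺)`-cardinal (a neat simplified `(κ,1)`-morass presented as a family of sets):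
a family `μ ⊆ ℘_κ(κ⁺)` which is well-founded under strict inclusion, locally small,
homogeneous, directed, locally almost directed, covers `κ⁺` and is neat. -/
structure TwoCardinal (κ : Cardinal.{0}) where
  mu : Set (Set Ordinal)
  mem_sub : ∀ X ∈ mu, X ⊆ Set.Iio (Order.succ κ).ord
  mem_small : ∀ X ∈ mu, (otp X).card < κ
  wf : WellFounded fun X Y : mu => (X : Set Ordinal) ⊂ (Y : Set Ordinal)
  locSmall : ∀ X : mu,
    #{Z : mu // (Z : Set Ordinal) ⊂ (X : Set Ordinal)} < Cardinal.lift.{1} κ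
  homog : ∀ X Y : mu, @IsWellFounded.rank _ _ ⟨wf⟩ X = @IsWellFounded.rank _ _ ⟨wf⟩ Y →
    otp (X : Set Ordinal) = otp (Y : Set Ordinal) ∧
    {Z | Z ∈ mu ∧ Z ⊂ (Y : Set Ordinal)} =
      (fun Z => omap (X : Set Ordinal) (Y : Set Ordinal) '' Z) ''
        {Z | Z ∈ mu ∧ Z ⊂ (X : Set Ordinal)}
  directed : ∀ X ∈ mu, ∀ Y ∈ mu, ∃ Z ∈ mu, X ⊆ Z ∧ Y ⊆ Z
  locAlmostDirected : ∀ X : mu,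
    (∀ Z₁ ∈ mu, ∀ Z₂ ∈ mu, Z₁ ⊂ (X : Set Ordinal) → Z₂ ⊂ (X : Set Ordinal) →
      ∃ Z ∈ mu, Z ⊂ (X : Set Ordinal) ∧ Z₁ ⊆ Z ∧ Z₂ ⊆ Z) ∨
    (∃ X₁ X₂ : mu, @IsWellFounded.rank _ _ ⟨wf⟩ X₁ = @IsWellFounded.rank _ _ ⟨wf⟩ X₂ ∧
      IsStar (X₁ : Set Ordinal) (X₂ : Set Ordinal) (X : Set Ordinal) ∧
      {Z | Z ∈ mu ∧ Z ⊂ (X : Set Ordinal)} =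
        {Z | Z ∈ mu ∧ Z ⊂ (X₁ : Set Ordinal)} ∪ {Z | Z ∈ mu ∧ Z ⊂ (X₂ : Set Ordinal)} ∪
          {(X₁ : Set Ordinal), (X₂ : Set Ordinal)})
  covers : ⋃₀ mu = Set.Iio (Order.succ κ).ord
  neat : ∀ X : mu, @IsWellFounded.rank _ _ ⟨wf⟩ X ≠ 0 →
    (X : Set Ordinal) = ⋃₀ {Z | Z ∈ mu ∧ Z ⊂ (X : Set Ordinal)}

namespace TwoCardinal

variable {κ : Cardinal} (M : TwoCardinal κ)

set_option linter.deprecated false in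
/-- The rank of an element of `μ` in the well-founded order `(μ, ⊂)`. -/
noncomputable def rank (X : M.mu) : Ordinal := olower (@IsWellFounded.rank _ _ ⟨M.wf⟩ X)

/-- The height of the well-founded order `(μ, ⊂)`. -/
noncomputable def ht : Ordinal := sSup (Set.range fun X : M.mu => M.rank X + 1)

/-- The term `μ_ξ(α)` of the μ-sequence at `α`: equal to `X ∩ α` for any `X ∈ μ` of
rank `ξ` containing `α` (this is independent of the choice of `X`). -/
noncomputable def seq (α ξ : Ordinal) : Set Ordinal :=
  ⋃₀ {S | ∃ X : M.mu, M.rank X = ξ ∧ α ∈ (X : Set Ordinal) ∧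
    S = (X : Set Ordinal) ∩ Set.Iio α}

/-- The μ-coloring `m(α,β) = min{rank X : α, β ∈ X ∈ μ}`. -/
noncomputable def mcol (a b : Ordinal) : Ordinal :=
  sInf {ξ | ∃ X : M.mu, M.rank X = ξ ∧ a ∈ (X : Set Ordinal) ∧ b ∈ (X : Set Ordinal)}

end TwoCardinal

/-! ### Auxiliary order-type toolkit -/

section OtpToolkit

set_option linter.deprecated false

noncomputable abbrev WellFounded.rank {α : Type*} {r : α → α → Prop} (hwf : WellFounded r)
    (a : α) : Ordinal := @IsWellFounded.rank α r ⟨hwf⟩ a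

theorem WellFounded.rank_eq {α : Type*} {r : α → α → Prop} (hwf : WellFounded r) (a : α) :
    hwf.rank a = ⨆ b : { b // r b a }, Order.succ (hwf.rank b) :=
  @IsWellFounded.rank_eq α r ⟨hwf⟩ a

theorem WellFounded.rank_lt_of_rel {α : Type*} {r : α → α → Prop} (hwf : WellFounded r)
    {a b : α} (h : r a b) : hwf.rank a < hwf.rank b :=
  by haveI : IsWellFounded α r := ⟨hwf⟩; exact IsWellFounded.rank_lt_of_rel h

/-- The order type of a set of ordinals, as an `Ordinal.{1}`. -/
noncomputable def otype (A : Set Ordinal.{0}) : Ordinal.{1} :=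
  Ordinal.type (Subrel ((· < ·) : Ordinal → Ordinal → Prop) (· ∈ A))

theorem otp_eq_olower_otype (A : Set Ordinal.{0}) : otp A = olower (otype A) := rfl

theorem olower_lift (a : Ordinal.{0}) : olower (Ordinal.lift.{1} a) = a := by
  apply le_antisymm
  · exact csInf_le ⟨0, fun x hx => zero_le (a := x)⟩ rfl
  · exact le_csInf ⟨a, rfl⟩ fun b hb => Ordinal.lift_le.mp hb.ge

theorem otype_mono {A B : Set Ordinal.{0}} (h : A ⊆ B) : otype A ≤ otype B :=
  RelEmbedding.ordinal_type_le
    (RelEmbedding.codRestrict B ((Subrel.relEmbedding _ A)) (fun a => h a.2))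

theorem otype_Iio (o : Ordinal.{0}) : otype (Set.Iio o) = Ordinal.lift.{1} o :=
  Ordinal.type_lt_Iio o

/-- A set of ordinals is bounded if contained in some `Iio`. -/
def OBdd (A : Set Ordinal.{0}) : Prop := ∃ o, A ⊆ Set.Iio o

theorem OBdd.mono2 {A B : Set Ordinal.{0}} (hB : OBdd B) (h : A ⊆ B) : OBdd A :=
  ⟨hB.choose, h.trans hB.choose_spec⟩

theorem OBdd.lift_otp {A : Set Ordinal.{0}} (hA : OBdd A) :
    Ordinal.lift.{1} (otp A) = otype A := by
  obtain ⟨o, ho⟩ := hA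
  obtain ⟨a, ha⟩ := Ordinal.mem_range_lift_of_le ((otype_mono ho).trans_eq (otype_Iio o))
  rw [otp_eq_olower_otype, ← ha, olower_lift]

theorem OBdd.otp_eq_iff {A B : Set Ordinal.{0}} (hA : OBdd A) (hB : OBdd B) :
    otp A = otp B ↔ otype A = otype B := by
  rw [← hA.lift_otp, ← hB.lift_otp, Ordinal.lift_inj]

theorem otype_inter_Iio {A : Set Ordinal.{0}} {a : Ordinal} (ha : a ∈ A) :
    otype (A ∩ Set.Iio a) =
      Ordinal.typein (Subrel ((· < ·) : Ordinal → Ordinal → Prop) (· ∈ A)) ⟨a, ha⟩ := by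
  rw [← Ordinal.type_subrel _ (⟨a, ha⟩ : A)]
  refine Ordinal.type_eq.2 ⟨?_⟩
  refine RelIso.ofSurjective
    (RelEmbedding.mk ⟨fun x => ⟨⟨x.1, x.2.1⟩, x.2.2⟩, ?_⟩ ?_) ?_
  · rintro ⟨x, hx⟩ ⟨y, hy⟩ h
    have : x = y := congrArg (fun z => z.1.1) h
    exact Subtype.ext this
  · rintro ⟨x, hx⟩ ⟨y, hy⟩
    exact Iff.rfl
  · rintro ⟨⟨x, hxA⟩, hxa⟩
    exact ⟨⟨x, hxA, hxa⟩, rfl⟩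

theorem otype_pos_inj {A : Set Ordinal.{0}} {a b : Ordinal} (ha : a ∈ A) (hb : b ∈ A)
    (h : otype (A ∩ Set.Iio a) = otype (A ∩ Set.Iio b)) : a = b := by
  rw [otype_inter_Iio ha, otype_inter_Iio hb] at h
  exact congrArg Subtype.val ((Ordinal.typein_inj _).1 h)

theorem iso_pos {A B : Set Ordinal.{0}}
    (f : Subrel ((· < ·) : Ordinal → Ordinal → Prop) (· ∈ A) ≃r
      Subrel ((· < ·) : Ordinal → Ordinal → Prop) (· ∈ B)) {a : Ordinal} (ha : a ∈ A) :
    otype (B ∩ Set.Iio (f ⟨a, ha⟩).1) = otype (A ∩ Set.Iio a) := by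
  rw [otype_inter_Iio ha, otype_inter_Iio (f ⟨a, ha⟩).2]
  exact Ordinal.typein_apply f.toInitialSeg ⟨a, ha⟩

section OmapLemmas
variable {A B : Set Ordinal.{0}} (hA : OBdd A) (hB : OBdd B)

include hA hB in
theorem omap_eq_iso (f : Subrel ((· < ·) : Ordinal → Ordinal → Prop) (· ∈ A) ≃r
      Subrel ((· < ·) : Ordinal → Ordinal → Prop) (· ∈ B))
    {a : Ordinal} (ha : a ∈ A) : omap A B a = (f ⟨a, ha⟩).1 := by
  have hset : {b | b ∈ B ∧ otp (B ∩ Set.Iio b) = otp (A ∩ Set.Iio a)} = {(f ⟨a, ha⟩).1} := by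
    ext b
    simp only [Set.mem_setOf_eq, Set.mem_singleton_iff]
    constructor
    · rintro ⟨hbB, hpos⟩
      rw [(hB.mono2 Set.inter_subset_left).otp_eq_iff (hA.mono2 Set.inter_subset_left)] at hpos
      exact otype_pos_inj hbB (f ⟨a, ha⟩).2 (hpos.trans (iso_pos f ha).symm)
    · rintro rfl
      exact ⟨(f ⟨a, ha⟩).2,
        ((hB.mono2 Set.inter_subset_left).otp_eq_iff (hA.mono2 Set.inter_subset_left)).2
          (iso_pos f ha)⟩
  rw [omap, hset, csInf_singleton]

variable (hAB : otype A = otype B)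
include hA hB hAB

theorem omap_mem {a : Ordinal} (ha : a ∈ A) : omap A B a ∈ B := by
  obtain ⟨f⟩ := Ordinal.type_eq.1 hAB
  rw [omap_eq_iso hA hB f ha]; exact (f ⟨a, ha⟩).2

theorem omap_injOn : Set.InjOn (omap A B) A := by
  obtain ⟨f⟩ := Ordinal.type_eq.1 hAB
  intro a ha a' ha' h
  rw [omap_eq_iso hA hB f ha, omap_eq_iso hA hB f ha'] at h
  exact congrArg Subtype.val (f.injective (Subtype.ext h))

theorem omap_fixed {c : Ordinal} (hcA : c ∈ A) (hcB : c ∈ B)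
    (hseg : A ∩ Set.Iio c = B ∩ Set.Iio c) : omap A B c = c := by
  obtain ⟨f⟩ := Ordinal.type_eq.1 hAB
  rw [omap_eq_iso hA hB f hcA]
  refine otype_pos_inj (f ⟨c, hcA⟩).2 hcB ?_
  rw [iso_pos f hcA, hseg]

end OmapLemmas

theorem star_seg {X₁ X₂ : Set Ordinal} (hd₁ : (X₁ \ X₂).Nonempty)
    (h₁ : ∀ a ∈ X₁ ∩ X₂, ∀ b ∈ X₁ \ X₂, a < b)
    (h₂ : ∀ b ∈ X₁ \ X₂, ∀ c ∈ X₂ \ X₁, b < c)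
    {b : Ordinal} (hb : b ∈ X₁ ∩ X₂) : X₁ ∩ Set.Iio b = X₂ ∩ Set.Iio b := by
  ext c
  constructor
  · rintro ⟨hc1, hcb⟩
    refine ⟨?_, hcb⟩
    by_contra hc2
    exact absurd hcb (not_lt.2 (h₁ b hb c ⟨hc1, hc2⟩).le)
  · rintro ⟨hc2, hcb⟩
    refine ⟨?_, hcb⟩
    by_contra hc1
    obtain ⟨d, hd⟩ := hd₁
    exact absurd hcb (not_lt.2 ((h₁ b hb d hd).trans (h₂ d hd c ⟨hc2, hc1⟩)).le)

end OtpToolkit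

/-! ### Auxiliary lemmas on `TwoCardinal` -/

set_option linter.deprecated false

namespace TwoCardinal

variable {κ : Cardinal} (M : TwoCardinal κ)

theorem obdd (X : M.mu) : OBdd (X : Set Ordinal) := ⟨_, M.mem_sub X X.2⟩

theorem wrank_lt {X Y : M.mu} (h : (X : Set Ordinal) ⊂ (Y : Set Ordinal)) :
    M.wf.rank X < M.wf.rank Y := M.wf.rank_lt_of_rel h

theorem wrank_mono {X Y : M.mu} (h : (X : Set Ordinal) ⊆ (Y : Set Ordinal)) :
    M.wf.rank X ≤ M.wf.rank Y := by
  rcases h.ssubset_or_eq with h' | h'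
  · exact (M.wrank_lt h').le
  · exact le_of_eq (congrArg M.wf.rank (Subtype.ext h'))

theorem eq_of_subset_of_wrank_le {X Y : M.mu} (h : (X : Set Ordinal) ⊆ (Y : Set Ordinal))
    (hr : M.wf.rank Y ≤ M.wf.rank X) : X = Y := by
  rcases h.ssubset_or_eq with h' | h'
  · exact absurd (M.wrank_lt h') hr.not_gt
  · exact Subtype.ext h'

theorem hotype {X₁ X₂ : M.mu} (hr : M.wf.rank X₁ = M.wf.rank X₂) :
    otype (X₁ : Set Ordinal) = otype (X₂ : Set Ordinal) :=
  ((M.obdd X₁).otp_eq_iff (M.obdd X₂)).1 (M.homog X₁ X₂ hr).1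

theorem rank_image {X₁ X₂ : M.mu} (hr : M.wf.rank X₁ = M.wf.rank X₂) (W : M.mu)
    (hW : (W : Set Ordinal) ⊂ (X₁ : Set Ordinal)) :
    ∃ W' : M.mu, (W' : Set Ordinal) = omap X₁ X₂ '' W ∧
      (W' : Set Ordinal) ⊂ (X₂ : Set Ordinal) ∧ M.wf.rank W' = M.wf.rank W := by
  have hinj : Set.InjOn (omap (X₁ : Set Ordinal) X₂) X₁ :=
    omap_injOn (M.obdd X₁) (M.obdd X₂) (M.hotype hr)
  revert hW
  refine M.wf.induction (C := fun W => (W : Set Ordinal) ⊂ (X₁ : Set Ordinal) →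
    ∃ W' : M.mu, (W' : Set Ordinal) = omap X₁ X₂ '' W ∧
      (W' : Set Ordinal) ⊂ (X₂ : Set Ordinal) ∧ M.wf.rank W' = M.wf.rank W) W ?_
  intro W IH hW
  have hmemW' : (omap (X₁ : Set Ordinal) X₂ '' W) ∈
      {Z | Z ∈ M.mu ∧ Z ⊂ (X₂ : Set Ordinal)} := by
    rw [(M.homog X₁ X₂ hr).2]
    exact ⟨W, ⟨W.2, hW⟩, rfl⟩
  refine ⟨⟨_, hmemW'.1⟩, rfl, hmemW'.2, ?_⟩
  apply le_antisymm
  · rw [M.wf.rank_eq]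
    refine Ordinal.iSup_le_iff.2 ?_
    rintro ⟨V, hVW'⟩
    have hVX₂ : (V : Set Ordinal) ∈ {Z | Z ∈ M.mu ∧ Z ⊂ (X₂ : Set Ordinal)} :=
      ⟨V.2, hVW'.trans_subset hmemW'.2.subset⟩
    rw [(M.homog X₁ X₂ hr).2] at hVX₂
    obtain ⟨U, ⟨hUmu, hUX₁⟩, hUV⟩ := hVX₂
    have hUV' : omap (X₁ : Set Ordinal) X₂ '' U = (V : Set Ordinal) := hUV
    have hUW : U ⊂ (W : Set Ordinal) := by
      rw [← hinj.image_ssubset_image_iff hUX₁.subset hW.subset, hUV']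
      exact hVW'
    obtain ⟨U', hU'eq, _, hU'rank⟩ := IH ⟨U, hUmu⟩ hUW hUX₁
    have hU'V : U' = V := Subtype.ext (by rw [hU'eq]; exact hUV')
    have hVr : M.wf.rank V = M.wf.rank (⟨U, hUmu⟩ : M.mu) := by
      rw [← hU'V, hU'rank]
    rw [hVr]
    exact Order.succ_le_of_lt (M.wrank_lt hUW)
  · rw [M.wf.rank_eq (a := W)]
    refine Ordinal.iSup_le_iff.2 ?_
    rintro ⟨V, hVW⟩
    obtain ⟨V', hV'eq, _, hV'rank⟩ := IH V hVW (hVW.trans_subset hW.subset)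
    have hV'W' : (V' : Set Ordinal) ⊂ omap (X₁ : Set Ordinal) X₂ '' W := by
      rw [hV'eq, hinj.image_ssubset_image_iff (hVW.subset.trans hW.subset) hW.subset]
      exact hVW
    have : M.wf.rank V' < M.wf.rank (⟨_, hmemW'.1⟩ : M.mu) := M.wrank_lt hV'W'
    rw [← hV'rank]
    exact Order.succ_le_of_lt this

theorem coh_cross {X₁ X₂ : M.mu} (hr12 : M.wf.rank X₁ = M.wf.rank X₂)
    (hd₁ : ((X₁ : Set Ordinal) \ (X₂ : Set Ordinal)).Nonempty)
    (h₁ : ∀ a ∈ (X₁ : Set Ordinal) ∩ (X₂ : Set Ordinal),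
      ∀ b ∈ (X₁ : Set Ordinal) \ (X₂ : Set Ordinal), a < b)
    (h₂ : ∀ b ∈ (X₁ : Set Ordinal) \ (X₂ : Set Ordinal),
      ∀ c ∈ (X₂ : Set Ordinal) \ (X₁ : Set Ordinal), b < c)
    (IH1 : ∀ X Y : M.mu, (X : Set Ordinal) ⊆ (X₁ : Set Ordinal) →
      (Y : Set Ordinal) ⊆ (X₁ : Set Ordinal) →
      M.wf.rank X = M.wf.rank Y → ∀ b, b ∈ (X : Set Ordinal) → b ∈ (Y : Set Ordinal) →
      (X : Set Ordinal) ∩ Set.Iio b = (Y : Set Ordinal) ∩ Set.Iio b)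
    {X Y : M.mu} (hX : (X : Set Ordinal) ⊆ (X₁ : Set Ordinal))
    (hY : (Y : Set Ordinal) ⊆ (X₂ : Set Ordinal))
    (hr : M.wf.rank X = M.wf.rank Y) {b : Ordinal} (hbX : b ∈ (X : Set Ordinal))
    (hbY : b ∈ (Y : Set Ordinal)) :
    (X : Set Ordinal) ∩ Set.Iio b = (Y : Set Ordinal) ∩ Set.Iio b := by
  have hseg : ∀ c ∈ (X₁ : Set Ordinal) ∩ (X₂ : Set Ordinal),
      (X₁ : Set Ordinal) ∩ Set.Iio c = (X₂ : Set Ordinal) ∩ Set.Iio c :=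
    fun c hc => star_seg hd₁ h₁ h₂ hc
  have hbI : b ∈ (X₁ : Set Ordinal) ∩ (X₂ : Set Ordinal) := ⟨hX hbX, hY hbY⟩
  have hot := M.hotype hr12
  have hA := M.obdd X₁
  have hB := M.obdd X₂
  have hinj := omap_injOn hA hB hot
  have hfix : ∀ c ∈ (X₁ : Set Ordinal) ∩ (X₂ : Set Ordinal),
      omap (X₁ : Set Ordinal) X₂ c = c :=
    fun c hc => omap_fixed hA hB hot hc.1 hc.2 (hseg c hc)
  rcases hY.ssubset_or_eq with hYss | hYeq
  · have hYmem : (Y : Set Ordinal) ∈ {V | V ∈ M.mu ∧ V ⊂ (X₂ : Set Ordinal)} := ⟨Y.2, hYss⟩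
    rw [(M.homog X₁ X₂ hr12).2] at hYmem
    obtain ⟨Y'set, ⟨hY'mu, hY'X₁⟩, hY'img0⟩ := hYmem
    have hY'img : omap (X₁ : Set Ordinal) X₂ '' Y'set = (Y : Set Ordinal) := hY'img0
    set Y' : M.mu := (⟨Y'set, hY'mu⟩ : M.mu) with hY'def
    have hY'rank : M.wf.rank Y' = M.wf.rank Y := by
      obtain ⟨W', hW'eq, _, hW'rank⟩ := M.rank_image hr12 Y' hY'X₁
      have hWY : W' = Y := Subtype.ext (by rw [hW'eq]; exact hY'img)
      rw [← hW'rank, hWY]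
    have hbY' : b ∈ Y'set := by
      have hb' : b ∈ omap (X₁ : Set Ordinal) X₂ '' Y'set := by rw [hY'img]; exact hbY
      obtain ⟨y, hyY', hyb⟩ := hb'
      have hyb' : y = b := hinj (hY'X₁.subset hyY') hbI.1 (by rw [hyb, hfix b hbI])
      rwa [← hyb']
    have hYseg : (Y : Set Ordinal) ∩ Set.Iio b = Y'set ∩ Set.Iio b := by
      ext c
      constructor
      · rintro ⟨hcY, hcb⟩
        have hc2 : c ∈ (X₂ : Set Ordinal) := hY hcY
        have hcI : c ∈ (X₁ : Set Ordinal) ∩ (X₂ : Set Ordinal) := by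
          have hmem : c ∈ (X₂ : Set Ordinal) ∩ Set.Iio b := ⟨hc2, hcb⟩
          rw [← hseg b hbI] at hmem
          exact ⟨hmem.1, hc2⟩
        have hc' : c ∈ omap (X₁ : Set Ordinal) X₂ '' Y'set := by rw [hY'img]; exact hcY
        obtain ⟨y, hyY', hyc⟩ := hc'
        have : y = c := hinj (hY'X₁.subset hyY') hcI.1 (by rw [hyc, hfix c hcI])
        exact ⟨this ▸ hyY', hcb⟩
      · rintro ⟨hcY', hcb⟩
        have hc1 : c ∈ (X₁ : Set Ordinal) := hY'X₁.subset hcY'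
        have hcI : c ∈ (X₁ : Set Ordinal) ∩ (X₂ : Set Ordinal) := by
          have hmem : c ∈ (X₁ : Set Ordinal) ∩ Set.Iio b := ⟨hc1, hcb⟩
          rw [hseg b hbI] at hmem
          exact ⟨hc1, hmem.1⟩
        refine ⟨?_, hcb⟩
        have : c ∈ omap (X₁ : Set Ordinal) X₂ '' Y'set := ⟨c, hcY', hfix c hcI⟩
        rwa [hY'img] at this
    rw [hYseg]
    exact IH1 X Y' hX hY'X₁.subset (hr.trans hY'rank.symm) b hbX hbY'
  · have hrY : M.wf.rank Y = M.wf.rank X₂ := congrArg M.wf.rank (Subtype.ext hYeq)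
    have hXX₁ : X = X₁ := M.eq_of_subset_of_wrank_le hX (by rw [hr, hrY, ← hr12])
    rw [congrArg (fun t : M.mu => (t : Set Ordinal)) hXX₁, hYeq]
    exact hseg b hbI

end TwoCardinal

namespace TwoCardinal

variable {κ : Cardinal} (M : TwoCardinal κ)

set_option linter.deprecated false

theorem star_facts {Z X₁ X₂ : M.mu} (hr12 : M.wf.rank X₁ = M.wf.rank X₂)
    (hsubZ : {V | V ∈ M.mu ∧ V ⊂ (Z : Set Ordinal)} =
      {V | V ∈ M.mu ∧ V ⊂ (X₁ : Set Ordinal)} ∪ {V | V ∈ M.mu ∧ V ⊂ (X₂ : Set Ordinal)} ∪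
        {(X₁ : Set Ordinal), (X₂ : Set Ordinal)}) :
    (X₁ : Set Ordinal) ⊂ (Z : Set Ordinal) ∧ (X₂ : Set Ordinal) ⊂ (Z : Set Ordinal) ∧
    M.wf.rank Z ≤ Order.succ (M.wf.rank X₁) ∧
    (∀ W : M.mu, (W : Set Ordinal) ⊂ (Z : Set Ordinal) →
      (W : Set Ordinal) ⊆ (X₁ : Set Ordinal) ∨ (W : Set Ordinal) ⊆ (X₂ : Set Ordinal)) := by
  have hX₁Z : (X₁ : Set Ordinal) ⊂ (Z : Set Ordinal) := by
    have : (X₁ : Set Ordinal) ∈ {V | V ∈ M.mu ∧ V ⊂ (Z : Set Ordinal)} := by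
      rw [hsubZ]
      exact Set.mem_union_right _ (Set.mem_insert _ _)
    exact this.2
  have hX₂Z : (X₂ : Set Ordinal) ⊂ (Z : Set Ordinal) := by
    have : (X₂ : Set Ordinal) ∈ {V | V ∈ M.mu ∧ V ⊂ (Z : Set Ordinal)} := by
      rw [hsubZ]
      exact Set.mem_union_right _ (Set.mem_insert_of_mem _ rfl)
    exact this.2
  have hdec : ∀ W : M.mu, (W : Set Ordinal) ⊂ (Z : Set Ordinal) →
      (W : Set Ordinal) ⊆ (X₁ : Set Ordinal) ∨ (W : Set Ordinal) ⊆ (X₂ : Set Ordinal) := by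
    intro W hW
    have hmem : (W : Set Ordinal) ∈ {V | V ∈ M.mu ∧ V ⊂ (Z : Set Ordinal)} := ⟨W.2, hW⟩
    rw [hsubZ] at hmem
    rcases hmem with (h | h) | h
    · exact Or.inl h.2.subset
    · exact Or.inr h.2.subset
    · rcases h with h | h
      · exact Or.inl (by rw [h])
      · exact Or.inr (by rw [h])
  refine ⟨hX₁Z, hX₂Z, ?_, hdec⟩
  rw [M.wf.rank_eq]
  refine Ordinal.iSup_le_iff.2 ?_
  rintro ⟨V, hVZ⟩
  refine Order.succ_le_succ ?_
  have hmem : (V : Set Ordinal) ∈ {W | W ∈ M.mu ∧ W ⊂ (Z : Set Ordinal)} := ⟨V.2, hVZ⟩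
  rw [hsubZ] at hmem
  rcases hmem with (h | h) | h
  · exact (M.wrank_lt h.2).le
  · exact (M.wrank_lt h.2).le.trans hr12.ge
  · rcases h with h | h
    · exact le_of_eq (congrArg M.wf.rank (Subtype.ext h))
    · exact le_of_eq ((congrArg M.wf.rank (Subtype.ext h)).trans hr12.symm)

theorem star_nonempty_diff {Z X₁ X₂ : M.mu}
    (hZeq : (Z : Set Ordinal) = (X₁ : Set Ordinal) ∪ (X₂ : Set Ordinal))
    (hX₁Z : (X₁ : Set Ordinal) ⊂ (Z : Set Ordinal))
    (hX₂Z : (X₂ : Set Ordinal) ⊂ (Z : Set Ordinal)) :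
    ((X₁ : Set Ordinal) \ (X₂ : Set Ordinal)).Nonempty ∧
    ((X₂ : Set Ordinal) \ (X₁ : Set Ordinal)).Nonempty := by
  constructor
  · rw [Set.nonempty_iff_ne_empty]
    intro h
    have hsub : (X₁ : Set Ordinal) ⊆ (X₂ : Set Ordinal) := Set.diff_eq_empty.1 h
    have : (Z : Set Ordinal) = (X₂ : Set Ordinal) := by
      rw [hZeq, Set.union_eq_self_of_subset_left hsub]
    exact hX₂Z.ne this.symm
  · rw [Set.nonempty_iff_ne_empty]
    intro h
    have hsub : (X₂ : Set Ordinal) ⊆ (X₁ : Set Ordinal) := Set.diff_eq_empty.1 h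
    have : (Z : Set Ordinal) = (X₁ : Set Ordinal) := by
      rw [hZeq, Set.union_eq_self_of_subset_right hsub]
    exact hX₁Z.ne this.symm

theorem coh (Z : M.mu) : ∀ X Y : M.mu, (X : Set Ordinal) ⊆ (Z : Set Ordinal) →
    (Y : Set Ordinal) ⊆ (Z : Set Ordinal) →
    M.wf.rank X = M.wf.rank Y → ∀ b, b ∈ (X : Set Ordinal) → b ∈ (Y : Set Ordinal) →
    (X : Set Ordinal) ∩ Set.Iio b = (Y : Set Ordinal) ∩ Set.Iio b := by
  refine M.wf.induction (C := fun Z => ∀ X Y : M.mu, (X : Set Ordinal) ⊆ (Z : Set Ordinal) →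
    (Y : Set Ordinal) ⊆ (Z : Set Ordinal) →
    M.wf.rank X = M.wf.rank Y → ∀ b, b ∈ (X : Set Ordinal) → b ∈ (Y : Set Ordinal) →
    (X : Set Ordinal) ∩ Set.Iio b = (Y : Set Ordinal) ∩ Set.Iio b) Z ?_
  intro Z IH X Y hXZ hYZ hr b hbX hbY
  rcases hXZ.ssubset_or_eq with hXss | hXeq
  swap
  · have hYX : (Y : Set Ordinal) ⊆ (X : Set Ordinal) := by rw [hXeq]; exact hYZ
    have : Y = X := M.eq_of_subset_of_wrank_le hYX hr.le
    rw [this]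
  rcases hYZ.ssubset_or_eq with hYss | hYeq
  swap
  · have hXY : (X : Set Ordinal) ⊆ (Y : Set Ordinal) := by rw [hYeq]; exact hXZ
    have : X = Y := M.eq_of_subset_of_wrank_le hXY hr.ge
    rw [this]
  rcases M.locAlmostDirected Z with hdir | ⟨X₁, X₂, hr12, hstar, hsubZ⟩
  · obtain ⟨W, hWmu, hWZ, hXW, hYW⟩ := hdir X X.2 Y Y.2 hXss hYss
    exact IH ⟨W, hWmu⟩ hWZ X Y hXW hYW hr b hbX hbY
  · obtain ⟨hX₁Z, hX₂Z, _, hdec⟩ := M.star_facts hr12 hsubZ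
    obtain ⟨hotp12, hZeq, h₁, h₂⟩ := hstar
    obtain ⟨hd₁, hd₂⟩ := M.star_nonempty_diff hZeq hX₁Z hX₂Z
    have IH1 : ∀ X Y : M.mu, (X : Set Ordinal) ⊆ (X₁ : Set Ordinal) →
        (Y : Set Ordinal) ⊆ (X₁ : Set Ordinal) →
        M.wf.rank X = M.wf.rank Y → ∀ b, b ∈ (X : Set Ordinal) → b ∈ (Y : Set Ordinal) →
        (X : Set Ordinal) ∩ Set.Iio b = (Y : Set Ordinal) ∩ Set.Iio b :=
      fun X Y hX hY hr b hbX hbY => IH X₁ hX₁Z X Y hX hY hr b hbX hbY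
    rcases hdec X hXss with hX1 | hX2 <;> rcases hdec Y hYss with hY1 | hY2
    · exact IH1 X Y hX1 hY1 hr b hbX hbY
    · exact M.coh_cross hr12 hd₁ h₁ h₂ IH1 hX1 hY2 hr hbX hbY
    · exact (M.coh_cross hr12 hd₁ h₁ h₂ IH1 hY1 hX2 hr.symm hbY hbX).symm
    · exact IH X₂ hX₂Z X Y hX2 hY2 hr b hbX hbY

theorem exists_rank_mem (Z : M.mu) : ∀ η ≤ M.wf.rank Z, ∀ b ∈ (Z : Set Ordinal),
    ∃ W : M.mu, (W : Set Ordinal) ⊆ (Z : Set Ordinal) ∧ b ∈ (W : Set Ordinal) ∧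
      M.wf.rank W = η := by
  refine M.wf.induction (C := fun Z => ∀ η ≤ M.wf.rank Z, ∀ b ∈ (Z : Set Ordinal),
    ∃ W : M.mu, (W : Set Ordinal) ⊆ (Z : Set Ordinal) ∧ b ∈ (W : Set Ordinal) ∧
      M.wf.rank W = η) Z ?_
  intro Z IH η hη b hb
  rcases eq_or_lt_of_le hη with heq | hlt
  · exact ⟨Z, subset_rfl, hb, heq.symm⟩
  have hZ0 : M.wf.rank Z ≠ 0 := (pos_iff_ne_zero).1 ((zero_le (a := η)).trans_lt hlt)
  have hW₂ : ∃ W₂ : {V : M.mu // (V : Set Ordinal) ⊂ (Z : Set Ordinal)},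
      η < Order.succ (M.wf.rank W₂.1) := by
    rw [← Ordinal.lt_iSup_iff]
    rw [M.wf.rank_eq] at hlt
    exact hlt
  obtain ⟨⟨W₂, hW₂Z⟩, hW₂lt⟩ := hW₂
  rw [Order.lt_succ_iff] at hW₂lt
  rcases M.locAlmostDirected Z with hdir | ⟨X₁, X₂, hr12, hstar, hsubZ⟩
  · have hbU : b ∈ ⋃₀ {V | V ∈ M.mu ∧ V ⊂ (Z : Set Ordinal)} := by
      rw [← M.neat Z hZ0]; exact hb
    obtain ⟨W₁, ⟨hW₁mu, hW₁Z⟩, hbW₁⟩ := hbU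
    obtain ⟨W, hWmu, hWZ, hW₁W, hW₂W⟩ := hdir W₁ hW₁mu W₂ W₂.2 hW₁Z hW₂Z
    have hηW : η ≤ M.wf.rank (⟨W, hWmu⟩ : M.mu) :=
      hW₂lt.trans (M.wrank_mono (X := W₂) (Y := ⟨W, hWmu⟩) hW₂W)
    obtain ⟨W', h1, h2, h3⟩ := IH ⟨W, hWmu⟩ hWZ η hηW b (hW₁W hbW₁)
    exact ⟨W', h1.trans hWZ.subset, h2, h3⟩
  · obtain ⟨hX₁Z, hX₂Z, hZle, hdec⟩ := M.star_facts hr12 hsubZ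
    have hη₁ : η ≤ M.wf.rank X₁ := Order.lt_succ_iff.1 (hlt.trans_le hZle)
    have hb' : b ∈ (X₁ : Set Ordinal) ∪ (X₂ : Set Ordinal) := by
      rw [← hstar.2.1]; exact hb
    rcases hb' with hb1 | hb2
    · obtain ⟨W, h1, h2, h3⟩ := IH X₁ hX₁Z η hη₁ b hb1
      exact ⟨W, h1.trans hX₁Z.subset, h2, h3⟩
    · obtain ⟨W, h1, h2, h3⟩ := IH X₂ hX₂Z η (hη₁.trans hr12.le) b hb2
      exact ⟨W, h1.trans hX₂Z.subset, h2, h3⟩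

theorem exists_rank_between (Z : M.mu) : ∀ Y : M.mu,
    (Y : Set Ordinal) ⊆ (Z : Set Ordinal) → ∀ η, M.wf.rank Y ≤ η → η ≤ M.wf.rank Z →
    ∃ Y' : M.mu, (Y : Set Ordinal) ⊆ (Y' : Set Ordinal) ∧
      (Y' : Set Ordinal) ⊆ (Z : Set Ordinal) ∧ M.wf.rank Y' = η := by
  refine M.wf.induction (C := fun Z => ∀ Y : M.mu,
    (Y : Set Ordinal) ⊆ (Z : Set Ordinal) → ∀ η, M.wf.rank Y ≤ η → η ≤ M.wf.rank Z →
    ∃ Y' : M.mu, (Y : Set Ordinal) ⊆ (Y' : Set Ordinal) ∧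
      (Y' : Set Ordinal) ⊆ (Z : Set Ordinal) ∧ M.wf.rank Y' = η) Z ?_
  intro Z IH Y hYZ η hη₁ hη₂
  rcases eq_or_lt_of_le hη₂ with heq | hlt
  · exact ⟨Z, hYZ, subset_rfl, heq.symm⟩
  have hYss : (Y : Set Ordinal) ⊂ (Z : Set Ordinal) := by
    rcases hYZ.ssubset_or_eq with h | h
    · exact h
    · exact ((hη₁.trans_lt hlt).ne (congrArg M.wf.rank (Subtype.ext h))).elim
  have hW₂ : ∃ W₂ : {V : M.mu // (V : Set Ordinal) ⊂ (Z : Set Ordinal)},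
      η < Order.succ (M.wf.rank W₂.1) := by
    rw [← Ordinal.lt_iSup_iff]
    rw [M.wf.rank_eq] at hlt
    exact hlt
  obtain ⟨⟨W₂, hW₂Z⟩, hW₂lt⟩ := hW₂
  rw [Order.lt_succ_iff] at hW₂lt
  rcases M.locAlmostDirected Z with hdir | ⟨X₁, X₂, hr12, hstar, hsubZ⟩
  · obtain ⟨W, hWmu, hWZ, hYW, hW₂W⟩ := hdir Y Y.2 W₂ W₂.2 hYss hW₂Z
    have hηW : η ≤ M.wf.rank (⟨W, hWmu⟩ : M.mu) :=
      hW₂lt.trans (M.wrank_mono (X := W₂) (Y := ⟨W, hWmu⟩) hW₂W)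
    obtain ⟨Y', h1, h2, h3⟩ := IH ⟨W, hWmu⟩ hWZ Y hYW η hη₁ hηW
    exact ⟨Y', h1, h2.trans hWZ.subset, h3⟩
  · obtain ⟨hX₁Z, hX₂Z, hZle, hdec⟩ := M.star_facts hr12 hsubZ
    have hη₁' : η ≤ M.wf.rank X₁ := Order.lt_succ_iff.1 (hlt.trans_le hZle)
    rcases hdec Y hYss with hY1 | hY2
    · obtain ⟨Y', h1, h2, h3⟩ := IH X₁ hX₁Z Y hY1 η hη₁ hη₁'
      exact ⟨Y', h1, h2.trans hX₁Z.subset, h3⟩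
    · obtain ⟨Y', h1, h2, h3⟩ := IH X₂ hX₂Z Y hY2 η hη₁ (hη₁'.trans hr12.le)
      exact ⟨Y', h1, h2.trans hX₂Z.subset, h3⟩

theorem coh' {X Y : M.mu} (hr : M.wf.rank X = M.wf.rank Y) {b : Ordinal}
    (hbX : b ∈ (X : Set Ordinal)) (hbY : b ∈ (Y : Set Ordinal)) :
    (X : Set Ordinal) ∩ Set.Iio b = (Y : Set Ordinal) ∩ Set.Iio b := by
  obtain ⟨Z, hZmu, hXZ, hYZ⟩ := M.directed X X.2 Y Y.2
  exact M.coh ⟨Z, hZmu⟩ X Y hXZ hYZ hr b hbX hbY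

theorem exists_mem {a : Ordinal} (ha : a < (Order.succ κ).ord) :
    ∃ X : M.mu, a ∈ (X : Set Ordinal) := by
  have : a ∈ ⋃₀ M.mu := by rw [M.covers]; exact ha
  obtain ⟨X, hX, haX⟩ := this
  exact ⟨⟨X, hX⟩, haX⟩

theorem exists_mem_pair {a b : Ordinal} (ha : a < (Order.succ κ).ord)
    (hb : b < (Order.succ κ).ord) :
    ∃ X : M.mu, a ∈ (X : Set Ordinal) ∧ b ∈ (X : Set Ordinal) := by
  obtain ⟨X, haX⟩ := M.exists_mem ha
  obtain ⟨Y, hbY⟩ := M.exists_mem hb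
  obtain ⟨Z, hZmu, hXZ, hYZ⟩ := M.directed X X.2 Y Y.2
  exact ⟨⟨Z, hZmu⟩, hXZ haX, hYZ hbY⟩

end TwoCardinal

theorem isRegular_lift {c : Cardinal.{0}} (hc : c.IsRegular) :
    (Cardinal.lift.{1} c).IsRegular := by
  constructor
  · exact Cardinal.aleph0_le_lift.2 hc.1
  · rw [← Cardinal.lift_ord, ← Ordinal.lift_cof]
    exact Cardinal.lift_le.2 hc.2

namespace TwoCardinal

variable {κ : Cardinal} (M : TwoCardinal κ)

set_option linter.deprecated false

theorem wrank_lt_ord (hκ : κ.IsRegular) (X : M.mu) :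
    M.wf.rank X < Ordinal.lift.{1} κ.ord := by
  refine M.wf.induction (C := fun X => M.wf.rank X < Ordinal.lift.{1} κ.ord) X ?_
  intro X IH
  have hreg := isRegular_lift hκ
  have hord : (Cardinal.lift.{1} κ).ord = Ordinal.lift.{1} κ.ord := (Cardinal.lift_ord κ).symm
  rw [M.wf.rank_eq, ← hord]
  refine Cardinal.iSup_lt_ord_lift_of_isRegular.{1,1} hreg ?_ ?_
  · rw [Cardinal.lift_id]
    exact M.locSmall X
  · rintro ⟨V, hV⟩
    exact (Cardinal.isSuccLimit_ord hreg.1).succ_lt (hord ▸ IH V hV)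

theorem rank_lift (hκ : κ.IsRegular) (X : M.mu) :
    Ordinal.lift.{1} (M.rank X) = M.wf.rank X := by
  obtain ⟨a, ha⟩ := Ordinal.mem_range_lift_of_le (M.wrank_lt_ord hκ X).le
  show Ordinal.lift.{1} (olower (M.wf.rank X)) = M.wf.rank X
  rw [← ha, olower_lift]

theorem rank_eq_iff (hκ : κ.IsRegular) {X Y : M.mu} :
    M.rank X = M.rank Y ↔ M.wf.rank X = M.wf.rank Y := by
  rw [← Ordinal.lift_inj, M.rank_lift hκ, M.rank_lift hκ]

theorem mcol_spec {a b : Ordinal} (ha : a < (Order.succ κ).ord) (hb : b < (Order.succ κ).ord) :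
    ∃ X : M.mu, M.rank X = M.mcol a b ∧ a ∈ (X : Set Ordinal) ∧ b ∈ (X : Set Ordinal) := by
  have hne : {ξ | ∃ X : M.mu, M.rank X = ξ ∧ a ∈ (X : Set Ordinal) ∧
      b ∈ (X : Set Ordinal)}.Nonempty := by
    obtain ⟨X, haX, hbX⟩ := M.exists_mem_pair ha hb
    exact ⟨M.rank X, X, rfl, haX, hbX⟩
  exact csInf_mem hne

theorem mcol_le {a b : Ordinal} (X : M.mu) (ha : a ∈ (X : Set Ordinal))
    (hb : b ∈ (X : Set Ordinal)) : M.mcol a b ≤ M.rank X :=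
  csInf_le' ⟨X, rfl, ha, hb⟩

theorem mk_lt (hκ : κ.IsRegular) (X : M.mu) :
    #(X : Set Ordinal) < Cardinal.lift.{1} κ := by
  have h1 : Cardinal.lift.{1} ((otp (X : Set Ordinal)).card) = (otype (X : Set Ordinal)).card := by
    rw [← (M.obdd X).lift_otp, Ordinal.lift_card]
  have h2 : (otype (X : Set Ordinal)).card = #(X : Set Ordinal) := Ordinal.card_type _
  rw [← h2, ← h1]
  exact Cardinal.lift_lt.2 (M.mem_small X X.2)

end TwoCardinal

/-- Basic properties of the μ-coloring: fibers below a fixed colour are small, and the two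
subadditivity inequalities hold. -/
theorem mcol_basic (κ : Cardinal) (hκ : κ.IsRegular) (M : TwoCardinal κ)
    (α β γ : Ordinal) (hαβ : α < β) (hβγ : β < γ) (hγ : γ < (Order.succ κ).ord)
    (ν : Ordinal) (hν : ν < κ.ord) :
    (otp {ξ | ξ < α ∧ M.mcol ξ α ≤ ν}).card < κ ∧
    M.mcol α γ ≤ max (M.mcol α β) (M.mcol β γ) ∧
    M.mcol α β ≤ max (M.mcol α γ) (M.mcol β γ) := by
  classical
  have hβo : β < (Order.succ κ).ord := hβγ.trans hγ
  have hαo : α < (Order.succ κ).ord := hαβ.trans hβo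
  have hreg := isRegular_lift hκ
  refine ⟨?_, ?_, ?_⟩
  · -- (a) fibers below a fixed colour are small
    set A := {ξ | ξ < α ∧ M.mcol ξ α ≤ ν} with hA
    set S : Ordinal → Set Ordinal := fun η =>
      if h : ∃ X : M.mu, M.rank X = η ∧ α ∈ (X : Set Ordinal) then
        ((h.choose : M.mu) : Set Ordinal) ∩ Set.Iio α else ∅ with hS
    have hAsub : A ⊆ ⋃ η ∈ Set.Iic ν, S η := by
      intro ξ hξ
      obtain ⟨hξα, hξν⟩ := hξ
      obtain ⟨X, hXr, hXξ, hXα⟩ := M.mcol_spec (hξα.trans hαo) hαo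
      have hP : ∃ X : M.mu, M.rank X = M.mcol ξ α ∧ α ∈ (X : Set Ordinal) := ⟨X, hXr, hXα⟩
      refine Set.mem_biUnion (show M.mcol ξ α ∈ Set.Iic ν from hξν) ?_
      simp only [hS]
      rw [dif_pos hP]
      have hspec := hP.choose_spec
      have hrank : M.wf.rank X = M.wf.rank hP.choose :=
        (M.rank_eq_iff hκ).1 (hXr.trans hspec.1.symm)
      have hcoh := M.coh' hrank hXα hspec.2
      rw [← hcoh]
      exact ⟨hXξ, hξα⟩
    have hT : #(Set.Iic ν) < Cardinal.lift.{1} κ := by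
      have hIic : Set.Iic ν = Set.Iio (Order.succ ν) := (Order.Iio_succ ν).symm
      rw [hIic, Ordinal.mk_Iio_ordinal, Ordinal.card_succ]
      exact Cardinal.lift_lt.2 (Cardinal.add_lt_of_lt hκ.1 (Cardinal.lt_ord.1 hν)
        (Cardinal.one_lt_aleph0.trans_le hκ.1))
    have hSsize : ∀ η : Set.Iic ν, #(S η.1) < Cardinal.lift.{1} κ := by
      rintro ⟨η, hη⟩
      simp only [hS]
      by_cases h : ∃ X : M.mu, M.rank X = η ∧ α ∈ (X : Set Ordinal)
      · rw [dif_pos h]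
        exact (Cardinal.mk_le_mk_of_subset Set.inter_subset_left).trans_lt (M.mk_lt hκ h.choose)
      · rw [dif_neg h]
        rw [Cardinal.mk_emptyCollection]
        exact Cardinal.aleph0_pos.trans_le hreg.1
    have hU : #(⋃ η ∈ Set.Iic ν, S η) < Cardinal.lift.{1} κ := by
      refine lt_of_le_of_lt (Cardinal.mk_biUnion_le S (Set.Iic ν)) ?_
      exact Cardinal.mul_lt_of_lt hreg.1 hT (Cardinal.iSup_lt_of_isRegular hreg hT hSsize)
    have hbddA : OBdd A := ⟨α, fun ξ hξ => hξ.1⟩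
    have hfin : Cardinal.lift.{1} ((otp A).card) < Cardinal.lift.{1} κ := by
      have h1 : Cardinal.lift.{1} ((otp A).card) = (otype A).card := by
        rw [← hbddA.lift_otp, Ordinal.lift_card]
      rw [h1, show (otype A).card = #A from Ordinal.card_type _]
      exact (Cardinal.mk_le_mk_of_subset hAsub).trans_lt hU
    exact Cardinal.lift_lt.1 hfin
  · -- (b) subadditivity
    obtain ⟨X, hXr, hXα, hXβ⟩ := M.mcol_spec hαo hβo
    obtain ⟨Y, hYr, hYβ, hYγ⟩ := M.mcol_spec hβo hγ
    rcases le_total (M.wf.rank X) (M.wf.rank Y) with hle | hle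
    · obtain ⟨W, hWY, hβW, hWr⟩ := M.exists_rank_mem Y (M.wf.rank X) hle β hYβ
      have hcoh := M.coh' hWr.symm hXβ hβW
      have hαW : α ∈ (W : Set Ordinal) ∩ Set.Iio β := by rw [← hcoh]; exact ⟨hXα, hαβ⟩
      have hαY : α ∈ (Y : Set Ordinal) := hWY hαW.1
      calc M.mcol α γ ≤ M.rank Y := M.mcol_le Y hαY hYγ
        _ = M.mcol β γ := hYr
        _ ≤ max (M.mcol α β) (M.mcol β γ) := le_max_right _ _
    · obtain ⟨Z, hZmu, hXZ, hYZ⟩ := M.directed X X.2 Y Y.2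
      obtain ⟨Y', hYY', hY'Z, hY'r⟩ := M.exists_rank_between ⟨Z, hZmu⟩ Y hYZ (M.wf.rank X) hle
        (M.wrank_mono (X := X) (Y := ⟨Z, hZmu⟩) hXZ)
      have hcoh := M.coh' hY'r.symm hXβ (hYY' hYβ)
      have hαY' : α ∈ (Y' : Set Ordinal) := by
        have : α ∈ (Y' : Set Ordinal) ∩ Set.Iio β := by rw [← hcoh]; exact ⟨hXα, hαβ⟩
        exact this.1
      calc M.mcol α γ ≤ M.rank Y' := M.mcol_le Y' hαY' (hYY' hYγ)
        _ = M.rank X := (M.rank_eq_iff hκ).2 hY'r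
        _ = M.mcol α β := hXr
        _ ≤ max (M.mcol α β) (M.mcol β γ) := le_max_left _ _
  · -- (c) subadditivity
    obtain ⟨X, hXr, hXα, hXγ⟩ := M.mcol_spec hαo hγ
    obtain ⟨Y, hYr, hYβ, hYγ⟩ := M.mcol_spec hβo hγ
    have hαγ : α < γ := hαβ.trans hβγ
    rcases le_total (M.wf.rank X) (M.wf.rank Y) with hle | hle
    · obtain ⟨W, hWY, hγW, hWr⟩ := M.exists_rank_mem Y (M.wf.rank X) hle γ hYγ
      have hcoh := M.coh' hWr.symm hXγ hγW
      have hαY : α ∈ (Y : Set Ordinal) := by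
        have : α ∈ (W : Set Ordinal) ∩ Set.Iio γ := by rw [← hcoh]; exact ⟨hXα, hαγ⟩
        exact hWY this.1
      calc M.mcol α β ≤ M.rank Y := M.mcol_le Y hαY hYβ
        _ = M.mcol β γ := hYr
        _ ≤ max (M.mcol α γ) (M.mcol β γ) := le_max_right _ _
    · obtain ⟨Z, hZmu, hXZ, hYZ⟩ := M.directed X X.2 Y Y.2
      obtain ⟨Y', hYY', hY'Z, hY'r⟩ := M.exists_rank_between ⟨Z, hZmu⟩ Y hYZ (M.wf.rank X) hle
        (M.wrank_mono (X := X) (Y := ⟨Z, hZmu⟩) hXZ)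
      have hcoh := M.coh' hY'r.symm hXγ (hYY' hYγ)
      have hαY' : α ∈ (Y' : Set Ordinal) := by
        have : α ∈ (Y' : Set Ordinal) ∩ Set.Iio γ := by rw [← hcoh]; exact ⟨hXα, hαγ⟩
        exact this.1
      calc M.mcol α β ≤ M.rank Y' := M.mcol_le Y' hαY' (hYY' hYβ)
        _ = M.rank X := (M.rank_eq_iff hκ).2 hY'r
        _ = M.mcol α γ := hXr
        _ ≤ max (M.mcol α γ) (M.mcol β γ) := le_max_left _ _
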